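/- Let I = [−1/2,1/2], Q = I × I, and let F : Q → Q be a Borel map of the form F(x,y) = (T(x), G(x,y)). Let μ be an F-invariant Borel probability measure on Q whose marginal μ_T on the first coordinate is T-invariant and absolutely continuous with respect to Lebesgue measure m on I. Fix α ∈ (0,1]. Assume: (1) there exist C₀ > 0 and Λ₀ ∈ (0,1) such that for every f ∈ BV_{1,α}, every bounded measurable g : I → ℝ and every n ≥ 1, | ∫ f·(g∘Tⁿ) dm − (∫ g dμ_T)(∫ f dm) | ≤ C₀ Λ₀ⁿ ‖g‖_∞ ‖f‖_{1,α}; (2) T is nonsingular with respect to m, and there is a finite collection of intervals I₁,…,I_m with ∪I_i = I such that T restricted to each I_i is a homeomorphism onto its image; (3) there is λ < 1 such that |G(x,y₁) − G(x,y₂)| ≤ λ|y₁ − y₂| for all x, y₁, y₂ ∈ I. Then there exist C > 0 and Λ ∈ (0,1) such that for every integrable f : Q → ℝ with f ≥ 0, every g : Q → ℝ with ‖g‖_{y-Lip} < ∞, and every n ≥ 1: | ∫_Q f·(g∘Fⁿ) dm₂ − (∫ g dμ)(∫ f dm₂) | ≤ C Λⁿ ‖g‖_{y-Lip} ( ‖π(f)‖_{1,α}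 + ‖f‖_{L¹(m₂)} ), where m₂ is two-dimensional Lebesgue measure on Q. -/

import Mathlib

open MeasureTheory Set Filter Metric
open scoped ENNReal

noncomputable section

/-- The interval `I = [−1/2, 1/2]`. -/
def J : Set ℝ := Set.Icc (-(1/2) : ℝ) (1/2)

/-- The square `Q = I × I`. -/
def Sq : Set (ℝ × ℝ) := J ×ˢ J

/-- The essential oscillation of `h` over the `ε`-ball around `x`, intersected with `I`. -/
def osc (h : ℝ → ℝ) (ε x : ℝ) : ℝ≥0∞ :=
  essSup (fun q : ℝ × ℝ => ENNReal.ofReal |h q.1 - h q.2|)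
    ((volume.restrict (Metric.ball x ε ∩ J)).prod (volume.restrict (Metric.ball x ε ∩ J)))

/-- `osc_1(h,ε) = ∫_I osc(h,ε,x) dm(x)`. -/
def osc1 (h : ℝ → ℝ) (ε : ℝ) : ℝ≥0∞ := ∫⁻ x in J, osc h ε x

/-- `Var_{1,r}(h) = sup_{0 < ε ≤ 1} ε^{−r} osc_1(h,ε)` (cutoff `A = 1`). -/
def Var1 (r : ℝ) (h : ℝ → ℝ) : ℝ≥0∞ :=
  ⨆ ε ∈ Set.Ioc (0 : ℝ) 1, ENNReal.ofReal (ε ^ (-r)) * osc1 h ε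

/-- `‖h‖_{1,r} = Var_{1,r}(h) + ‖h‖_{L¹(m)}` (valued in `[0,∞]`). -/
def norm1E (r : ℝ) (h : ℝ → ℝ) : ℝ≥0∞ := Var1 r h + ∫⁻ x in J, ENNReal.ofReal |h x|

/-- `π(f)(x) = ∫_I f(x,t) dt`. -/
def piF (f : ℝ × ℝ → ℝ) : ℝ → ℝ := fun x => ∫ t in J, f (x, t)

/-- `‖g‖_sup = sup_{Q} |g|` (valued in `[0,∞]`). -/
def supQ (g : ℝ × ℝ → ℝ) : ℝ≥0∞ := ⨆ p ∈ Sq, ENNReal.ofReal |g p|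

/-- `Lip_y(g) = sup_{x, y₁ ≠ y₂} |g(x,y₂) − g(x,y₁)| / |y₂ − y₁|` (valued in `[0,∞]`). -/
def lipY (g : ℝ × ℝ → ℝ) : ℝ≥0∞ :=
  ⨆ x ∈ J, ⨆ y₁ ∈ J, ⨆ y₂ ∈ J,
    ENNReal.ofReal |g (x, y₁) - g (x, y₂)| / ENNReal.ofReal |y₁ - y₂|

/-- `‖g‖_{y-Lip} = ‖g‖_sup + Lip_y(g)`. -/
def yLipNorm (g : ℝ × ℝ → ℝ) : ℝ≥0∞ := supQ g + lipY g
lemma J_measurableSet : MeasurableSet J := measurableSet_Icc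
lemma Sq_measurableSet : MeasurableSet Sq := J_measurableSet.prod J_measurableSet
lemma zero_mem_J : (0:ℝ) ∈ J := by constructor <;> norm_num

lemma restrict_Sq : (volume : Measure (ℝ × ℝ)).restrict Sq
    = ((volume : Measure ℝ).restrict J).prod ((volume : Measure ℝ).restrict J) := by
  rw [Measure.prod_restrict, ← Measure.volume_eq_prod]; rfl

lemma abs_le_supQ {g : ℝ × ℝ → ℝ} (hfin : supQ g ≠ ⊤) {p : ℝ × ℝ} (hp : p ∈ Sq) :
    |g p| ≤ (supQ g).toReal := by
  have h : ENNReal.ofReal |g p| ≤ supQ g := by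
    unfold supQ
    exact le_biSup (fun q => ENNReal.ofReal |g q|) hp
  have h2 := ENNReal.toReal_mono hfin h
  rwa [ENNReal.toReal_ofReal (abs_nonneg _)] at h2

lemma lip_bound {g : ℝ × ℝ → ℝ} (hfin : lipY g ≠ ⊤) {x y₁ y₂ : ℝ}
    (hx : x ∈ J) (h1 : y₁ ∈ J) (h2 : y₂ ∈ J) :
    |g (x, y₁) - g (x, y₂)| ≤ (lipY g).toReal * |y₁ - y₂| := by
  rcases eq_or_ne y₁ y₂ with h | h
  · simp [h]
  · have hd : ENNReal.ofReal |y₁ - y₂| ≠ 0 := by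
      simp [ENNReal.ofReal_eq_zero, abs_pos, sub_ne_zero.mpr h, not_le,
        abs_pos.mpr (sub_ne_zero.mpr h)]
    have key : ENNReal.ofReal |g (x, y₁) - g (x, y₂)| / ENNReal.ofReal |y₁ - y₂| ≤ lipY g := by
      calc ENNReal.ofReal |g (x, y₁) - g (x, y₂)| / ENNReal.ofReal |y₁ - y₂|
          ≤ ⨆ y₂ ∈ J, ENNReal.ofReal |g (x, y₁) - g (x, y₂)| / ENNReal.ofReal |y₁ - y₂| :=
            le_biSup (fun y₂ => ENNReal.ofReal |g (x, y₁) - g (x, y₂)| / ENNReal.ofReal |y₁ - y₂|) h2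
        _ ≤ ⨆ y₁ ∈ J, ⨆ y₂ ∈ J, ENNReal.ofReal |g (x, y₁) - g (x, y₂)| / ENNReal.ofReal |y₁ - y₂| :=
            le_biSup (fun y₁ => ⨆ y₂ ∈ J, ENNReal.ofReal |g (x, y₁) - g (x, y₂)| / ENNReal.ofReal |y₁ - y₂|) h1
        _ ≤ lipY g := by
            unfold lipY
            exact le_biSup (fun x => ⨆ y₁ ∈ J, ⨆ y₂ ∈ J, ENNReal.ofReal |g (x, y₁) - g (x, y₂)| / ENNReal.ofReal |y₁ - y₂|) hx
    have key2 : ENNReal.ofReal |g (x, y₁) - g (x, y₂)| ≤ lipY g * ENNReal.ofReal |y₁ - y₂| :=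
      (ENNReal.div_le_iff_le_mul (Or.inl hd) (Or.inl ENNReal.ofReal_ne_top)).mp key
    have h3 := ENNReal.toReal_mono (ENNReal.mul_ne_top hfin ENNReal.ofReal_ne_top) key2
    rwa [ENNReal.toReal_ofReal (abs_nonneg _), ENNReal.toReal_mul,
      ENNReal.toReal_ofReal (abs_nonneg _)] at h3

lemma iterate_fst (T : ℝ → ℝ) (G : ℝ × ℝ → ℝ) (F : ℝ × ℝ → ℝ × ℝ)
    (hF : ∀ p, F p = (T p.1, G p)) : ∀ (m : ℕ) (p : ℝ × ℝ), (F^[m] p).1 = T^[m] p.1 := by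
  intro m
  induction m with
  | zero => intro p; simp
  | succ m ih =>
    intro p
    rw [Function.iterate_succ_apply, Function.iterate_succ_apply, ih (F p)]
    congr 1
    rw [hF p]

lemma fiber_contract (T : ℝ → ℝ) (G : ℝ × ℝ → ℝ) (F : ℝ × ℝ → ℝ × ℝ)
    (hF : ∀ p, F p = (T p.1, G p)) (hFQ : Set.MapsTo F Sq Sq)
    (lam lam1 : ℝ) (hle : lam ≤ lam1) (h0 : 0 ≤ lam1)
    (h3 : ∀ x ∈ J, ∀ y₁ ∈ J, ∀ y₂ ∈ J, |G (x, y₁) - G (x, y₂)| ≤ lam * |y₁ - y₂|) :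
    ∀ m : ℕ, ∀ p ∈ Sq, ∀ q ∈ Sq, p.1 = q.1 →
      (F^[m] p).1 = (F^[m] q).1 ∧ |(F^[m] p).2 - (F^[m] q).2| ≤ lam1 ^ m * |p.2 - q.2| := by
  intro m
  induction m with
  | zero =>
    intro p hp q hq h
    simp only [Function.iterate_zero, id_eq, pow_zero, one_mul]
    exact ⟨h, le_rfl⟩
  | succ m ih =>
    intro p hp q hq h
    rw [Function.iterate_succ_apply, Function.iterate_succ_apply]
    have hFp : F p ∈ Sq := hFQ hp
    have hFq : F q ∈ Sq := hFQ hq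
    have hfst : (F p).1 = (F q).1 := by simp [hF p, hF q, h]
    obtain ⟨ih1, ih2⟩ := ih (F p) hFp (F q) hFq hfst
    refine ⟨ih1, ih2.trans ?_⟩
    have h2 : |G p - G q| ≤ lam * |p.2 - q.2| := by
      have hGp : G p = G (p.1, p.2) := rfl
      have hGq : G q = G (p.1, q.2) := by rw [h]
      rw [hGp, hGq]
      exact h3 p.1 hp.1 p.2 hp.2 q.2 hq.2
    have hsnd : |(F p).2 - (F q).2| ≤ lam1 * |p.2 - q.2| := by
      calc |(F p).2 - (F q).2| = |G p - G q| := by rw [hF p, hF q]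
        _ ≤ lam * |p.2 - q.2| := h2
        _ ≤ lam1 * |p.2 - q.2| := mul_le_mul_of_nonneg_right hle (abs_nonneg _)
    calc lam1 ^ m * |(F p).2 - (F q).2| ≤ lam1 ^ m * (lam1 * |p.2 - q.2|) :=
          mul_le_mul_of_nonneg_left hsnd (pow_nonneg h0 m)
      _ = lam1 ^ (m + 1) * |p.2 - q.2| := by ring

set_option maxHeartbeats 1000000 in
/-- Skew products `F(x,y) = (T(x), G(x,y))` with contracting fibers over a base `T` with
exponential convergence to equilibrium have exponential convergence to equilibrium. -/
theorem skew_product_convergence_to_equilibrium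
    (T : ℝ → ℝ) (G : ℝ × ℝ → ℝ) (F : ℝ × ℝ → ℝ × ℝ)
    (hF : ∀ p, F p = (T p.1, G p)) (hFQ : Set.MapsTo F Sq Sq) (hFmeas : Measurable F)
    (μ : Measure (ℝ × ℝ)) [IsProbabilityMeasure μ] (hμQ : μ Sq = 1)
    (hinv : μ.map F = μ)
    (hTinv : (μ.map Prod.fst).map T = μ.map Prod.fst)
    (hac : μ.map Prod.fst ≪ volume)
    (α : ℝ) (hα : α ∈ Set.Ioc (0 : ℝ) 1)
    -- (1) exponential convergence to equilibrium of the base map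
    (h1 : ∃ C₀ > (0 : ℝ), ∃ Λ₀ ∈ Set.Ioo (0 : ℝ) 1, ∀ f g : ℝ → ℝ, ∀ Kg : ℝ,
      Measurable f → Var1 α f < ⊤ → Measurable g → (∀ x, |g x| ≤ Kg) →
      ∀ n : ℕ, 1 ≤ n →
        ENNReal.ofReal |(∫ x in J, f x * g (T^[n] x)) -
            (∫ x, g x ∂(μ.map Prod.fst)) * ∫ x in J, f x|
          ≤ ENNReal.ofReal (C₀ * Λ₀ ^ n * Kg) * norm1E α f)
    -- (2) nonsingularity and piecewise monotonicity of the base map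
    (h2a : ∀ A : Set ℝ, MeasurableSet A → volume A = 0 → volume (T ⁻¹' A ∩ J) = 0)
    (h2b : ∃ (k : ℕ) (a b : Fin k → ℝ),
      (⋃ i, Set.Icc (a i) (b i)) = J ∧
      ∀ i, ContinuousOn T (Set.Icc (a i) (b i)) ∧ Set.InjOn T (Set.Icc (a i) (b i)))
    -- (3) uniform contraction on vertical leaves
    (lam : ℝ) (hlam : lam < 1)
    (h3 : ∀ x ∈ J, ∀ y₁ ∈ J, ∀ y₂ ∈ J, |G (x, y₁) - G (x, y₂)| ≤ lam * |y₁ - y₂|) :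
    ∃ C > (0 : ℝ), ∃ Λ ∈ Set.Ioo (0 : ℝ) 1, ∀ f g : ℝ × ℝ → ℝ,
      Measurable f → IntegrableOn f Sq volume → (∀ p, 0 ≤ f p) →
      Measurable g → yLipNorm g < ⊤ →
      ∀ n : ℕ, 1 ≤ n →
        ENNReal.ofReal |(∫ p in Sq, f p * g (F^[n] p)) -
            (∫ p, g p ∂μ) * ∫ p in Sq, f p|
          ≤ ENNReal.ofReal (C * Λ ^ n) * yLipNorm g *
              (norm1E α (piF f) + ∫⁻ p in Sq, ENNReal.ofReal |f p|) := by
  obtain ⟨C₀, hC₀, Λ₀, hΛ₀, hbase⟩ := h1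
  set lam1 : ℝ := max lam (1/2) with hlam1def
  have hlam1_nonneg : (0:ℝ) ≤ lam1 := le_trans (by norm_num) (le_max_right _ _)
  have hlam1_lt : lam1 < 1 := max_lt hlam (by norm_num)
  have hlamle : lam ≤ lam1 := le_max_left _ _
  set Λ : ℝ := max (Real.sqrt Λ₀) (Real.sqrt lam1) with hΛdef
  have hΛpos : 0 < Λ := lt_of_lt_of_le (Real.sqrt_pos.mpr hΛ₀.1) (le_max_left _ _)
  have hΛlt1 : Λ < 1 := by
    apply max_lt
    · nlinarith [Real.sq_sqrt hΛ₀.1.le, Real.sqrt_nonneg Λ₀, hΛ₀.2]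
    · nlinarith [Real.sq_sqrt hlam1_nonneg, Real.sqrt_nonneg lam1, hlam1_lt]
  have hΛhalf : (1/2 : ℝ) ≤ Λ := by
    have h12 : (1/2 : ℝ) ≤ Real.sqrt lam1 := by
      have hle2 : Real.sqrt (1/2) ≤ Real.sqrt lam1 := Real.sqrt_le_sqrt (le_max_right _ _)
      nlinarith [Real.sq_sqrt (by norm_num : (0:ℝ) ≤ (1/2:ℝ)), Real.sqrt_nonneg ((1/2):ℝ)]
    exact h12.trans (le_max_right _ _)
  refine ⟨2 * (2 + C₀), by linarith, Λ, ⟨hΛpos, hΛlt1⟩, ?_⟩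
  intro f g hfmeas hfint hfpos hgmeas hgfin n hn
  -- Degenerate case: g vanishes on the square
  by_cases hg0 : yLipNorm g = 0
  · have hz : supQ g = 0 ∧ lipY g = 0 := add_eq_zero.mp hg0
    have hgz : ∀ p ∈ Sq, g p = 0 := by
      intro p hp
      have h : ENNReal.ofReal |g p| ≤ supQ g := by
        unfold supQ
        exact le_biSup (fun q => ENNReal.ofReal |g q|) hp
      rw [hz.1] at h
      have := ENNReal.ofReal_eq_zero.mp (le_antisymm h zero_le)
      exact abs_eq_zero.mp (le_antisymm this (abs_nonneg _))
    have haeSq : ∀ᵐ p ∂μ, p ∈ Sq := by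
      have hc : μ Sqᶜ = 0 := by
        have h := measure_compl Sq_measurableSet (measure_ne_top μ Sq)
        rw [hμQ, measure_univ] at h
        simpa using h
      rw [ae_iff]
      simpa [Set.compl_def] using hc
    have e1 : (∫ p in Sq, f p * g (F^[n] p)) = 0 := by
      rw [setIntegral_congr_fun Sq_measurableSet
        (show Set.EqOn (fun p => f p * g (F^[n] p)) (fun _ => (0:ℝ)) Sq from
          fun p hp => by simp [hgz _ ((hFQ.iterate n) hp)])]
      simp
    have e2 : (∫ p, g p ∂μ) = 0 :=
      integral_eq_zero_of_ae (haeSq.mono fun p hp => hgz p hp)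
    simp [e1, e2, hg0]
  -- Degenerate case: RHS is infinite
  by_cases hfin3 : norm1E α (piF f) + (∫⁻ p in Sq, ENNReal.ofReal |f p|) = ⊤
  · rw [hfin3, ENNReal.mul_top]
    · exact le_top
    · refine mul_ne_zero ?_ hg0
      simp only [ne_eq, ENNReal.ofReal_eq_zero, not_le]
      have : (0:ℝ) < Λ ^ n := pow_pos hΛpos n
      nlinarith
  -- Main case
  obtain ⟨hNne, hFne⟩ := ENNReal.add_ne_top.mp hfin3
  obtain ⟨hsup_lt, hlip_lt⟩ := ENNReal.add_lt_top.mp hgfin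
  have hsne : supQ g ≠ ⊤ := hsup_lt.ne
  have hlne : lipY g ≠ ⊤ := hlip_lt.ne
  set S : ℝ := (supQ g).toReal with hSdef
  set L : ℝ := (lipY g).toReal with hLdef
  set N : ℝ := (norm1E α (piF f)).toReal with hNdef
  set F₁ : ℝ := (∫⁻ p in Sq, ENNReal.ofReal |f p|).toReal with hF₁def
  have hS0 : 0 ≤ S := ENNReal.toReal_nonneg
  have hL0 : 0 ≤ L := ENNReal.toReal_nonneg
  have hN0 : 0 ≤ N := ENNReal.toReal_nonneg
  have hF10 : 0 ≤ F₁ := ENNReal.toReal_nonneg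
  set m' : ℕ := (n + 1) / 2 with hm'def
  set m : ℕ := n / 2 with hmdef
  have hm : m + m' = n := by omega
  have hm1 : 1 ≤ m' := by omega
  -- power estimates
  have hsq1 : lam1 ^ m = Real.sqrt lam1 ^ (2 * m) := by
    rw [pow_mul, Real.sq_sqrt hlam1_nonneg]
  have hsq2 : Λ₀ ^ m' = Real.sqrt Λ₀ ^ (2 * m') := by
    rw [pow_mul, Real.sq_sqrt hΛ₀.1.le]
  have hpowA : Λ * lam1 ^ m ≤ Λ ^ n := by
    calc Λ * lam1 ^ m = Λ * Real.sqrt lam1 ^ (2 * m) := by rw [hsq1]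
      _ ≤ Λ * Λ ^ (2 * m) :=
          mul_le_mul_of_nonneg_left
            (pow_le_pow_left₀ (Real.sqrt_nonneg _) (le_max_right _ _) _) hΛpos.le
      _ = Λ ^ (2 * m + 1) := by ring
      _ ≤ Λ ^ n := pow_le_pow_of_le_one hΛpos.le hΛlt1.le (by omega)
  have hp1 : lam1 ^ m ≤ 2 * Λ ^ n := by
    nlinarith [mul_le_mul_of_nonneg_right hΛhalf (pow_nonneg hlam1_nonneg m)]
  have hp2 : Λ₀ ^ m' ≤ Λ ^ n := by
    calc Λ₀ ^ m' = Real.sqrt Λ₀ ^ (2 * m') := hsq2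
      _ ≤ Λ ^ (2 * m') := pow_le_pow_left₀ (Real.sqrt_nonneg _) (le_max_left _ _) _
      _ ≤ Λ ^ n := pow_le_pow_of_le_one hΛpos.le hΛlt1.le (by omega)
  -- T is measurable and maps J into J
  have hTmeas : Measurable T := by
    have hTe : T = fun x => (F (x, 0)).1 := by
      funext x
      rw [hF (x, 0)]
    rw [hTe]
    exact measurable_fst.comp (hFmeas.comp (measurable_id.prodMk measurable_const))
  have hTJ : Set.MapsTo T J J := by
    intro x hx
    have hmem : ((x : ℝ), (0:ℝ)) ∈ Sq := ⟨hx, zero_mem_J⟩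
    have h := hFQ hmem
    rw [hF (x, 0)] at h
    exact h.1
  -- the auxiliary observable on the base
  set gbar : ℝ → ℝ := fun x => g (F^[m] (max (-(1/2)) (min (1/2) x), 0)) with hgbar
  have hproj_mem : ∀ x : ℝ, max (-(1/2) : ℝ) (min (1/2) x) ∈ J :=
    fun x => ⟨le_max_left _ _, max_le (by norm_num) (min_le_left _ _)⟩
  have hproj_id : ∀ x ∈ J, max (-(1/2) : ℝ) (min (1/2) x) = x := by
    intro x hx
    rw [min_eq_right hx.2, max_eq_right hx.1]
  have hgbarmeas : Measurable gbar := by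
    simp only [hgbar]
    exact hgmeas.comp ((hFmeas.iterate m).comp
      ((measurable_const.max (measurable_const.min measurable_id)).prodMk measurable_const))
  have hgS : ∀ p ∈ Sq, |g p| ≤ S := fun p hp => abs_le_supQ hsne hp
  have hgbarbdd : ∀ x, |gbar x| ≤ S := by
    intro x
    exact hgS _ ((hFQ.iterate m) ⟨hproj_mem x, zero_mem_J⟩)
  -- the key contraction estimate
  have key : ∀ (k : ℕ) (x y : ℝ), x ∈ J → y ∈ J →
      |g (F^[k] (x, y)) - g (F^[k] (x, 0))| ≤ L * lam1 ^ k := by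
    intro k x y hx hy
    have hxy : ((x : ℝ), y) ∈ Sq := ⟨hx, hy⟩
    have hx0 : ((x : ℝ), (0:ℝ)) ∈ Sq := ⟨hx, zero_mem_J⟩
    obtain ⟨hfst, hsnd⟩ :=
      fiber_contract T G F hF hFQ lam lam1 hlamle hlam1_nonneg h3 k (x, y) hxy (x, 0) hx0 rfl
    have hmem1 : F^[k] (x, y) ∈ Sq := (hFQ.iterate k) hxy
    have hmem2 : F^[k] (x, 0) ∈ Sq := (hFQ.iterate k) hx0
    have hre : g (F^[k] (x, 0)) = g ((F^[k] (x, y)).1, (F^[k] (x, 0)).2) := by rw [hfst]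
    calc |g (F^[k] (x, y)) - g (F^[k] (x, 0))|
        = |g ((F^[k] (x, y)).1, (F^[k] (x, y)).2) - g ((F^[k] (x, y)).1, (F^[k] (x, 0)).2)| := by
          rw [← hre]
      _ ≤ L * |(F^[k] (x, y)).2 - (F^[k] (x, 0)).2| := lip_bound hlne hmem1.1 hmem1.2 hmem2.2
      _ ≤ L * (lam1 ^ k * |y - 0|) := mul_le_mul_of_nonneg_left hsnd hL0
      _ ≤ L * lam1 ^ k := by
          have hyle : |y - 0| ≤ 1 := by
            rw [sub_zero]
            have := abs_le.mpr ⟨hy.1, hy.2⟩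
            linarith
          exact mul_le_mul_of_nonneg_left
            (mul_le_of_le_one_right (pow_nonneg hlam1_nonneg k) hyle) hL0
  -- integrability facts
  have hint1 : Integrable (fun p => f p * g (F^[n] p)) (volume.restrict Sq) := by
    refine Integrable.mono' (hfint.abs.const_mul S)
      (hfmeas.mul (hgmeas.comp (hFmeas.iterate n))).aestronglyMeasurable ?_
    refine (ae_restrict_iff' Sq_measurableSet).mpr (Filter.Eventually.of_forall fun p hp => ?_)
    rw [Real.norm_eq_abs, abs_mul, mul_comm]
    exact mul_le_mul_of_nonneg_right (hgS _ ((hFQ.iterate n) hp)) (abs_nonneg _)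
  have hgbT : Measurable fun p : ℝ × ℝ => gbar (T^[m'] p.1) :=
    (hgbarmeas.comp (hTmeas.iterate m')).comp measurable_fst
  have hint2 : Integrable (fun p => f p * gbar (T^[m'] p.1)) (volume.restrict Sq) := by
    refine Integrable.mono' (hfint.abs.const_mul S)
      (hfmeas.mul hgbT).aestronglyMeasurable
      (Filter.Eventually.of_forall fun p => ?_)
    rw [Real.norm_eq_abs, abs_mul, mul_comm]
    exact mul_le_mul_of_nonneg_right (hgbarbdd _) (abs_nonneg _)
  have hfint' : Integrable f (((volume : Measure ℝ).restrict J).prod ((volume : Measure ℝ).restrict J)) := by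
    rw [← restrict_Sq]
    exact hfint
  have hint2' : Integrable (fun p => f p * gbar (T^[m'] p.1))
      (((volume : Measure ℝ).restrict J).prod ((volume : Measure ℝ).restrict J)) := by
    rw [← restrict_Sq]
    exact hint2
  -- Fubini
  have fub2 : (∫ p in Sq, f p) = ∫ x in J, piF f x := by
    rw [restrict_Sq, integral_prod f hfint']
    rfl
  have fub1 : (∫ p in Sq, f p * gbar (T^[m'] p.1)) = ∫ x in J, piF f x * gbar (T^[m'] x) := by
    rw [restrict_Sq, integral_prod _ hint2']
    congr 1
    funext x
    exact integral_mul_const (gbar (T^[m'] x)) (fun y => f (x, y))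
  have hF1 : (∫ p in Sq, f p) = F₁ := by
    rw [hF₁def]
    rw [integral_eq_lintegral_of_nonneg_ae (Filter.Eventually.of_forall fun p => hfpos p)
      hfmeas.aestronglyMeasurable]
    congr 1
    refine lintegral_congr fun p => ?_
    rw [abs_of_nonneg (hfpos p)]
  have hFfJ : (∫ x in J, piF f x) = F₁ := by rw [← fub2, hF1]
  -- measurability and bounded variation of the marginal
  have hπmeas : Measurable (piF f) := by
    have h := MeasureTheory.StronglyMeasurable.integral_prod_right
      (ν := (volume : Measure ℝ).restrict J) (f := fun x y => f (x, y))
      hfmeas.stronglyMeasurable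
    exact h.measurable
  have hVar : Var1 α (piF f) < ⊤ := by
    have hle : Var1 α (piF f) ≤ norm1E α (piF f) := le_self_add
    exact lt_of_le_of_lt hle (lt_top_iff_ne_top.mpr hNne)
  -- the base estimate applied to gbar
  have hb := hbase (piF f) gbar S hπmeas hVar hgbarmeas hgbarbdd m' hm1
  have hb' : |(∫ x in J, piF f x * gbar (T^[m'] x)) -
      (∫ x, gbar x ∂(μ.map Prod.fst)) * ∫ x in J, piF f x| ≤ C₀ * Λ₀ ^ m' * S * N := by
    have hKnn : 0 ≤ C₀ * Λ₀ ^ m' * S :=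
      mul_nonneg (mul_nonneg hC₀.le (pow_nonneg hΛ₀.1.le _)) hS0
    have h2 := ENNReal.toReal_mono (ENNReal.mul_ne_top ENNReal.ofReal_ne_top hNne) hb
    rwa [ENNReal.toReal_ofReal (abs_nonneg _), ENNReal.toReal_mul,
      ENNReal.toReal_ofReal hKnn, ← hNdef] at h2
  -- a.e. membership in Sq for μ
  have haeSq : ∀ᵐ p ∂μ, p ∈ Sq := by
    have hc : μ Sqᶜ = 0 := by
      have h := measure_compl Sq_measurableSet (measure_ne_top μ Sq)
      rw [hμQ, measure_univ] at h
      simpa using h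
    rw [ae_iff]
    simpa [Set.compl_def] using hc
  -- invariance of μ under iterates
  have hinv_it : ∀ k : ℕ, μ.map F^[k] = μ := by
    intro k
    induction k with
    | zero => simp [Measure.map_id]
    | succ k ih =>
      rw [Function.iterate_succ', ← Measure.map_map hFmeas (hFmeas.iterate k), ih, hinv]
  have hGμ : (∫ p, g p ∂μ) = ∫ p, g (F^[m] p) ∂μ := by
    nth_rewrite 1 [← hinv_it m]
    exact integral_map (hFmeas.iterate m).aemeasurable hgmeas.aestronglyMeasurable
  have hGhat : (∫ x, gbar x ∂(μ.map Prod.fst)) = ∫ p, gbar p.1 ∂μ :=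
    integral_map measurable_fst.aemeasurable hgbarmeas.aestronglyMeasurable
  -- bound 3 : difference of the two equilibrium averages
  have hia : Integrable (fun p => g (F^[m] p)) μ := by
    refine Integrable.mono' (integrable_const S)
      (hgmeas.comp (hFmeas.iterate m)).aestronglyMeasurable
      (haeSq.mono fun p hp => ?_)
    rw [Real.norm_eq_abs]
    exact hgS _ ((hFQ.iterate m) hp)
  have hib : Integrable (fun p => gbar p.1) μ := by
    refine Integrable.mono' (integrable_const S)
      (hgbarmeas.comp measurable_fst).aestronglyMeasurable
      (Filter.Eventually.of_forall fun p => ?_)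
    rw [Real.norm_eq_abs]
    exact hgbarbdd _
  have hB3 : |(∫ p, g p ∂μ) - ∫ x, gbar x ∂(μ.map Prod.fst)| ≤ L * lam1 ^ m := by
    rw [hGμ, hGhat, ← integral_sub hia hib]
    have hbd : ∀ᵐ p ∂μ, ‖g (F^[m] p) - gbar p.1‖ ≤ L * lam1 ^ m := by
      refine haeSq.mono fun p hp => ?_
      rw [Real.norm_eq_abs]
      have h1' : gbar p.1 = g (F^[m] (p.1, 0)) := by
        simp only [hgbar]
        rw [hproj_id p.1 hp.1]
      rw [h1']
      exact key m p.1 p.2 hp.1 hp.2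
    have h := norm_integral_le_of_norm_le_const hbd
    rwa [probReal_univ, mul_one, Real.norm_eq_abs] at h
  -- bound 1 : replacing g ∘ F^n by gbar ∘ T^[m']
  have hB1 : |(∫ p in Sq, f p * g (F^[n] p)) - ∫ p in Sq, f p * gbar (T^[m'] p.1)| ≤
      L * lam1 ^ m * F₁ := by
    rw [← integral_sub hint1 hint2, ← Real.norm_eq_abs]
    have h2 : ∀ p ∈ Sq, ‖f p * g (F^[n] p) - f p * gbar (T^[m'] p.1)‖ ≤ (L * lam1 ^ m) * f p := by
      intro p hp
      have hq : F^[m'] p ∈ Sq := (hFQ.iterate m') hp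
      have hq1 : (F^[m'] p).1 = T^[m'] p.1 := iterate_fst T G F hF m' p
      have e1 : g (F^[n] p) = g (F^[m] ((F^[m'] p).1, (F^[m'] p).2)) := by
        rw [← hm, Function.iterate_add_apply]
      have e2 : gbar (T^[m'] p.1) = g (F^[m] ((F^[m'] p).1, 0)) := by
        simp only [hgbar]
        rw [← hq1, hproj_id _ hq.1]
      rw [Real.norm_eq_abs, ← mul_sub, abs_mul, abs_of_nonneg (hfpos p), e1, e2, mul_comm]
      exact mul_le_mul_of_nonneg_right (key m (F^[m'] p).1 (F^[m'] p).2 hq.1 hq.2) (hfpos p)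
    calc ‖∫ p in Sq, (f p * g (F^[n] p) - f p * gbar (T^[m'] p.1))‖
        ≤ ∫ p in Sq, ‖f p * g (F^[n] p) - f p * gbar (T^[m'] p.1)‖ :=
          norm_integral_le_integral_norm _
      _ ≤ ∫ p in Sq, (L * lam1 ^ m) * f p :=
          setIntegral_mono_on (hint1.sub hint2).norm (hfint.const_mul _) Sq_measurableSet h2
      _ = (L * lam1 ^ m) * ∫ p in Sq, f p := integral_const_mul _ _
      _ = L * lam1 ^ m * F₁ := by rw [hF1]
  -- triangle inequality assembly
  have hb'' : |(∫ p in Sq, f p * gbar (T^[m'] p.1)) -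
      (∫ x, gbar x ∂(μ.map Prod.fst)) * F₁| ≤ C₀ * Λ₀ ^ m' * S * N := by
    rw [fub1, ← hFfJ]
    exact hb'
  have htri : |(∫ p in Sq, f p * g (F^[n] p)) - (∫ p, g p ∂μ) * F₁| ≤
      L * lam1 ^ m * F₁ + (C₀ * Λ₀ ^ m' * S * N + L * lam1 ^ m * F₁) := by
    calc |(∫ p in Sq, f p * g (F^[n] p)) - (∫ p, g p ∂μ) * F₁|
        ≤ |(∫ p in Sq, f p * g (F^[n] p)) - ∫ p in Sq, f p * gbar (T^[m'] p.1)| +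
          |(∫ p in Sq, f p * gbar (T^[m'] p.1)) - (∫ p, g p ∂μ) * F₁| := abs_sub_le _ _ _
      _ ≤ |(∫ p in Sq, f p * g (F^[n] p)) - ∫ p in Sq, f p * gbar (T^[m'] p.1)| +
          (|(∫ p in Sq, f p * gbar (T^[m'] p.1)) - (∫ x, gbar x ∂(μ.map Prod.fst)) * F₁| +
           |(∫ x, gbar x ∂(μ.map Prod.fst)) * F₁ - (∫ p, g p ∂μ) * F₁|) :=
          add_le_add_right (abs_sub_le _ _ _) _
      _ ≤ L * lam1 ^ m * F₁ + (C₀ * Λ₀ ^ m' * S * N + L * lam1 ^ m * F₁) := by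
          refine add_le_add hB1 (add_le_add hb'' ?_)
          rw [← sub_mul, abs_mul, abs_of_nonneg hF10]
          refine mul_le_mul_of_nonneg_right ?_ hF10
          rw [abs_sub_comm]
          exact hB3
  have hfinal : |(∫ p in Sq, f p * g (F^[n] p)) - (∫ p, g p ∂μ) * F₁| ≤
      2 * (2 + C₀) * Λ ^ n * ((S + L) * (N + F₁)) := by
    refine htri.trans ?_
    have hq1 : L * F₁ ≤ (S + L) * (N + F₁) :=
      mul_le_mul (by linarith) (by linarith) hF10 (by linarith)
    have hq2 : S * N ≤ (S + L) * (N + F₁) :=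
      mul_le_mul (by linarith) (by linarith) hN0 (by linarith)
    have hm1' : lam1 ^ m * (L * F₁) ≤ (2 * Λ ^ n) * ((S + L) * (N + F₁)) :=
      mul_le_mul hp1 hq1 (mul_nonneg hL0 hF10) (by positivity)
    have hm2' : Λ₀ ^ m' * (S * N) ≤ (Λ ^ n) * ((S + L) * (N + F₁)) :=
      mul_le_mul hp2 hq2 (mul_nonneg hS0 hN0) (by positivity)
    calc L * lam1 ^ m * F₁ + (C₀ * Λ₀ ^ m' * S * N + L * lam1 ^ m * F₁)
        = 2 * (lam1 ^ m * (L * F₁)) + C₀ * (Λ₀ ^ m' * (S * N)) := by ring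
      _ ≤ 2 * (2 * Λ ^ n * ((S + L) * (N + F₁))) + C₀ * (Λ ^ n * ((S + L) * (N + F₁))) := by
          have h2' := mul_le_mul_of_nonneg_left hm2' hC₀.le
          nlinarith [hm1']
      _ ≤ 2 * (2 + C₀) * Λ ^ n * ((S + L) * (N + F₁)) := by
          have hPn : 0 ≤ Λ ^ n * ((S + L) * (N + F₁)) :=
            mul_nonneg (pow_nonneg hΛpos.le n) (mul_nonneg (by linarith) (by linarith))
          nlinarith [mul_nonneg hC₀.le hPn]
  -- conversion to ℝ≥0∞
  have hyeq : yLipNorm g = ENNReal.ofReal (S + L) := by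
    rw [ENNReal.ofReal_add hS0 hL0, hSdef, hLdef,
      ENNReal.ofReal_toReal hsne, ENNReal.ofReal_toReal hlne]
    rfl
  have h3eq : norm1E α (piF f) + (∫⁻ p in Sq, ENNReal.ofReal |f p|) = ENNReal.ofReal (N + F₁) := by
    rw [ENNReal.ofReal_add hN0 hF10, hNdef, hF₁def,
      ENNReal.ofReal_toReal hNne, ENNReal.ofReal_toReal hFne]
  rw [hF1, hyeq, h3eq, ← ENNReal.ofReal_mul (by positivity), ← ENNReal.ofReal_mul (by positivity)]
  refine ENNReal.ofReal_le_ofReal ?_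
  calc |(∫ p in Sq, f p * g (F^[n] p)) - (∫ p, g p ∂μ) * F₁|
      ≤ 2 * (2 + C₀) * Λ ^ n * ((S + L) * (N + F₁)) := hfinal
    _ = 2 * (2 + C₀) * Λ ^ n * (S + L) * (N + F₁) := by ring
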